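/- Let G ⊆ Homeo₊(S¹) be a group acting on the circle admitting a ping-pong partition Θ with interval collection 𝓘 and gap collection 𝓙, relative to a preferred generating set 𝓖. If g₁, g₂ ∈ 𝓖 and I ∈ 𝓘 are such that both images g₁(I) and g₂(I) are 𝓘-Markovian (each equals a union of at least two intervals of 𝓘 together with the gaps between them), then g₁g₂⁻¹ ∈ 𝓖. -/
import Mathlib


open Pointwise

noncomputable section

/-- The circle `ℝ/ℤ`. -/
abbrev 𝕊 : Type := AddCircle (1 : ℝ)

/-- A bijection of the circle is orientation preserving if it lifts to a strictly
increasing bijection of `ℝ` commuting with the translation by `1`. -/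
def OrientationPreserving (f : 𝕊 → 𝕊) : Prop :=
  ∃ F : ℝ → ℝ, StrictMono F ∧ Function.Surjective F ∧ (∀ x, F (x + 1) = F x + 1) ∧
    ∀ x : ℝ, f (x : 𝕊) = (F x : 𝕊)

/-- The set of connected components of a subset `O` of the circle. -/
def comps (O : Set 𝕊) : Set (Set 𝕊) := {I | ∃ x ∈ O, I = connectedComponentIn O x}

section PingPong

variable {G : Type*} [Group G] {V S : Type*}

/-- The preferred generating set `𝓖 = {G_v, α_s(A_s)s}` of a marked virtually free
group: the union of the vertex groups `Gv v` and of the cosets `(A s)·(t s)`. -/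
def genSet (Gv : V → Subgroup G) (A : S → Subgroup G) (t : S → G) : Set G :=
  (⋃ v, (Gv v : Set G)) ∪ ⋃ s, (fun a => a * t s) '' (A s : Set G)

variable [MulAction G 𝕊]

/-- The atoms of the partition `Θ = {U_v, V_s}`. -/
def atomsOf (U : V → Set 𝕊) (Z : S → Set 𝕊) : Set (Set 𝕊) := Set.range U ∪ Set.range Z

/-- The collection `𝓘` of connected components of atoms of `Θ`. -/
def intervalsOf (U : V → Set 𝕊) (Z : S → Set 𝕊) : Set (Set 𝕊) :=
  {I | ∃ O ∈ atomsOf U Z, I ∈ comps O}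

/-- The collection `𝓙` of gaps of `𝓘`: the connected components of the complement of
`⋃ 𝓘`. -/
def gapsOf (U : V → Set 𝕊) (Z : S → Set 𝕊) : Set (Set 𝕊) :=
  {J | ∃ x ∈ (⋃₀ intervalsOf U Z)ᶜ, J = connectedComponentIn (⋃₀ intervalsOf U Z)ᶜ x}

/-- `g(I)` is `𝓘`-Markovian: it is the union of at least two intervals `I₀, …, I_m ∈ 𝓘`
together with (at least one of) the gaps `J₁, …, J_m ∈ 𝓙` between them. -/
def IsMarkovian (U : V → Set 𝕊) (Z : S → Set 𝕊) (g : G) (I : Set 𝕊) : Prop :=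
  ∃ 𝓐 : Set (Set 𝕊), 𝓐 ⊆ intervalsOf U Z ∪ gapsOf U Z ∧
    (∃ I₁ ∈ 𝓐 ∩ intervalsOf U Z, ∃ I₂ ∈ 𝓐 ∩ intervalsOf U Z, I₁ ≠ I₂) ∧
    (𝓐 ∩ gapsOf U Z).Nonempty ∧ g • I = ⋃₀ 𝓐

-- A Markovian image cannot be contained in a single atom, since it contains a gap.
lemma not_subset_atom_of_isMarkovian {U : V → Set 𝕊} {Z : S → Set 𝕊} {g : G} {I : Set 𝕊}
    (h : IsMarkovian U Z g I) : ¬ ∃ O ∈ atomsOf U Z, g • I ⊆ O := by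
  rintro ⟨O, hO, hsub⟩
  obtain ⟨𝓐, -, -, ⟨J, hJA, hJgap⟩, heq⟩ := h
  obtain ⟨x, hx, rfl⟩ := hJgap
  have hxJ : x ∈ connectedComponentIn (⋃₀ intervalsOf U Z)ᶜ x := mem_connectedComponentIn hx
  have hxg : x ∈ g • I := heq ▸ Set.mem_sUnion.2 ⟨_, hJA, hxJ⟩
  have hxO : x ∈ O := hsub hxg
  exact hx (Set.mem_sUnion.2 ⟨connectedComponentIn O x,
    ⟨O, hO, ⟨x, hxO, rfl⟩⟩, mem_connectedComponentIn hxO⟩)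

/-- If `G ⊆ Homeo₊(𝕊¹)` admits a ping-pong partition `Θ` with intervals `𝓘` and gaps
`𝓙` relative to the preferred generating set `𝓖`, and `g₁, g₂ ∈ 𝓖`, `I ∈ 𝓘` are such
that both `g₁(I)` and `g₂(I)` are `𝓘`-Markovian, then `g₁ g₂⁻¹ ∈ 𝓖`. -/
theorem mul_inv_mem_genSet_of_isMarkovian
    (hcont : ∀ g : G, Continuous fun x : 𝕊 => g • x)
    (hor : ∀ g : G, OrientationPreserving fun x : 𝕊 => g • x)
    (bar : S → S) (hbar : ∀ s, bar (bar s) = s)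
    (o : S → V) (Gv : V → Subgroup G) (A : S → Subgroup G) (t : S → G)
    (hAle : ∀ s, A s ≤ Gv (o s)) (htbar : ∀ s, t (bar s) = (t s)⁻¹)
    (U : V → Set 𝕊) (Z : S → Set 𝕊)
    (hZne : ∀ s, (Z s).Nonempty)
    (hUU : Pairwise fun v w : V => Disjoint (U v) (U w))
    (hZZ : Pairwise fun s s' : S => Disjoint (Z s) (Z s'))
    (hUZ : ∀ v s, Disjoint (U v) (Z s))
    (hopen : ∀ O ∈ atomsOf U Z, IsOpen O)
    (hfin : ∀ O ∈ atomsOf U Z, (comps O).Finite)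
    (hUloc : ∀ v, ∀ g ∈ genSet Gv A t, g ∉ Gv v →
      ∃ O ∈ atomsOf U Z, g • U v ⊆ O)
    (hZloc : ∀ s, ∀ g ∈ genSet Gv A t, (¬ ∃ a ∈ A (bar s), g = a * t (bar s)) →
      ∃ O ∈ atomsOf U Z, g • Z s ⊆ O)
    (hPPP3 : ∀ g ∈ genSet Gv A t, ∀ I ∈ intervalsOf U Z,
      (∃ O ∈ atomsOf U Z, g • I ⊆ O) ∨ IsMarkovian U Z g I) :
    ∀ g₁ ∈ genSet Gv A t, ∀ g₂ ∈ genSet Gv A t, ∀ I ∈ intervalsOf U Z,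
      IsMarkovian U Z g₁ I → IsMarkovian U Z g₂ I → g₁ * g₂⁻¹ ∈ genSet Gv A t := by
  intro g₁ hg₁ g₂ hg₂ I hI hM₁ hM₂
  obtain ⟨O, hO, hIc⟩ := hI
  have hIO : I ⊆ O := by
    obtain ⟨x, hx, rfl⟩ := hIc
    exact connectedComponentIn_subset O x
  rcases hO with ⟨v, rfl⟩ | ⟨s, rfl⟩
  · -- I is a component of U v : both g₁, g₂ ∈ Gv v
    have key : ∀ g ∈ genSet Gv A t, IsMarkovian U Z g I → g ∈ Gv v := by
      intro g hg hM
      by_contra hne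
      obtain ⟨O', hO', hsub⟩ := hUloc v g hg hne
      exact not_subset_atom_of_isMarkovian hM
        ⟨O', hO', (Set.smul_set_mono hIO).trans hsub⟩
    exact Or.inl (Set.mem_iUnion.2 ⟨v, mul_mem (key g₁ hg₁ hM₁) (inv_mem (key g₂ hg₂ hM₂))⟩)
  · -- I is a component of Z s : gᵢ = aᵢ * t (bar s)
    have key : ∀ g ∈ genSet Gv A t, IsMarkovian U Z g I →
        ∃ a ∈ A (bar s), g = a * t (bar s) := by
      intro g hg hM
      by_contra hne
      obtain ⟨O', hO', hsub⟩ := hZloc s g hg hne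
      exact not_subset_atom_of_isMarkovian hM
        ⟨O', hO', (Set.smul_set_mono hIO).trans hsub⟩
    obtain ⟨a₁, ha₁, rfl⟩ := key g₁ hg₁ hM₁
    obtain ⟨a₂, ha₂, rfl⟩ := key g₂ hg₂ hM₂
    have : a₁ * t (bar s) * (a₂ * t (bar s))⁻¹ = a₁ * a₂⁻¹ := by group
    rw [this]
    exact Or.inl (Set.mem_iUnion.2 ⟨o (bar s),
      hAle (bar s) (mul_mem ha₁ (inv_mem ha₂))⟩)

end PingPong
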